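/- Let F_q be a finite field of characteristic p with 3 | q (so p = 3), and let V be the space of 3×3 traceless matrices over F_q. Then there exists A ∈ V such that A + αI₃ has rank 3 for all α ∈ F_q. Consequently, the coset A + F_q·I₃ in V/⟨I₃⟩ contains no matrix of rank less than 3, and A + F_q·I₃ cannot be written as a sum of two cosets each containing a rank-1 traceless matrix. -/
import Mathlib

open Matrix


private lemma mrank_add_le {F : Type*} [Field F] (B C : Matrix (Fin 3) (Fin 3) F) :
    (B + C).rank ≤ B.rank + C.rank := by
  classical
  have h : LinearMap.range (B + C).mulVecLin ≤
      LinearMap.range B.mulVecLin ⊔ LinearMap.range C.mulVecLin := by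
    rintro x ⟨v, rfl⟩
    rw [Matrix.mulVecLin_add]
    exact Submodule.mem_sup.2 ⟨_, ⟨v, rfl⟩, _, ⟨v, rfl⟩, by simp⟩
  calc (B + C).rank ≤ Module.finrank F
        ↥(LinearMap.range B.mulVecLin ⊔ LinearMap.range C.mulVecLin) :=
        Submodule.finrank_mono h
    _ ≤ B.rank + C.rank := Submodule.finrank_add_le_finrank_add_finrank _ _

/-- Let `F_q` be a finite field with `3 ∣ q` (characteristic `3`).
Then there is a traceless `3 × 3` matrix `A` over `F_q` such that `A + α·I` has rank
`3` for every `α ∈ F_q`.  Consequently the coset `A + F_q·I` contains no matrix of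
rank less than `3`, and `A + F_q·I` cannot be written as a sum of two cosets each
containing a rank-one traceless matrix. -/
theorem stmt8 (F : Type*) [Field F] [Fintype F] (h3 : 3 ∣ Fintype.card F) :
    ∃ A : Matrix (Fin 3) (Fin 3) F, A.trace = 0 ∧
      (∀ α : F, (A + α • (1 : Matrix (Fin 3) (Fin 3) F)).rank = 3) ∧
      (∀ α : F, ¬ (A + α • (1 : Matrix (Fin 3) (Fin 3) F)).rank < 3) ∧
      ¬ ∃ (B C : Matrix (Fin 3) (Fin 3) F) (α : F),
          B.trace = 0 ∧ C.trace = 0 ∧ B.rank = 1 ∧ C.rank = 1 ∧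
          A = B + C + α • (1 : Matrix (Fin 3) (Fin 3) F) := by
  have hg : ¬ Function.Surjective (fun x : F => x - x ^ 3) := by
    intro hs
    have hinj := (Finite.injective_iff_surjective).2 hs
    have : (0 : F) = 1 := hinj (by ring)
    exact zero_ne_one this
  rw [Function.Surjective] at hg
  push_neg at hg
  obtain ⟨c, hc⟩ := hg
  set A : Matrix (Fin 3) (Fin 3) F := !![0,0,c;1,0,1;0,1,0] with hA
  have hrank : ∀ α : F, (A + α • (1 : Matrix (Fin 3) (Fin 3) F)).rank = 3 := by
    intro α
    have heq : A + α • (1 : Matrix (Fin 3) (Fin 3) F) = !![α,0,c;1,α,1;0,1,α] := by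
      ext i j
      fin_cases i <;> fin_cases j <;>
        simp [hA, Matrix.add_apply, Matrix.smul_apply, Matrix.one_apply]
    have hdet : (A + α • (1 : Matrix (Fin 3) (Fin 3) F)).det = α ^ 3 - α + c := by
      rw [heq, Matrix.det_fin_three]; simp; ring
    have hne : (A + α • (1 : Matrix (Fin 3) (Fin 3) F)).det ≠ 0 := by
      rw [hdet]
      intro h
      exact hc α (by linear_combination -h)
    have := Matrix.rank_of_isUnit (A + α • 1)
      ((Matrix.isUnit_iff_isUnit_det _).2 (isUnit_iff_ne_zero.2 hne))
    simpa using this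
  refine ⟨A, by simp [hA, Matrix.trace_fin_three], hrank, fun α h => by simp [hrank α] at h, ?_⟩
  rintro ⟨B, C, α, _, _, hB, hC, hsum⟩
  have h2 : (A + (-α) • (1 : Matrix (Fin 3) (Fin 3) F)).rank ≤ 2 := by
    have : A + (-α) • (1 : Matrix (Fin 3) (Fin 3) F) = B + C := by
      rw [hsum]; module
    rw [this]
    calc (B + C).rank ≤ B.rank + C.rank := mrank_add_le B C
    _ = 2 := by rw [hB, hC]
  rw [hrank (-α)] at h2
  omega
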